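/- (Herded kernel approximates the Gibbs kernel) For a fully connected graph with fixed scan order and irreducible corresponding Gibbs chain, let l, B be the constants from the linear visiting rate, and let T ≥ T* := 2B/l. Then the single-step herded Gibbs empirical conditional satisfies |P_{T,i}^{(τ)}(X_i = y_i | x_{−i}) − π(X_i = y_i | x_{−i})| ≤ 2/(lT) for all states x_{−i} in the support, and consequently the L1 induced norm of the per-variable kernel discrepancy satisfies ‖(T̃_{T,i}^{(τ)} − 𝒯_i)^T‖₁ ≤ 4/(lT). -/

import Mathlib

open Finset

/-- Joint states of `N` binary variables. -/
abbrev GState (N : ℕ) := Fin N → Bool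

/-- Full conditional probability π(Xᵢ = b | x₋ᵢ) for a target distribution π. -/
noncomputable def condProb {N : ℕ} (π : GState N → ℝ) (i : Fin N) (x : GState N)
    (b : Bool) : ℝ :=
  π (Function.update x i b) / (π (Function.update x i true) + π (Function.update x i false))

/-- Variable updated at step `t ≥ 1` of a fixed systematic scan (step kN + i with
1 ≤ i ≤ N updates the i-th variable, i.e. index i − 1). -/
def scanVar (N : ℕ) (hN : 0 < N) (t : ℕ) : Fin N := ⟨(t - 1) % N, Nat.mod_lt _ hN⟩

/-- A herded Gibbs trajectory on a fully connected graph of `N` binary variables with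
target `π`: one weight per variable `i` and per assignment of all the other variables
(weights are indexed by full states but only the off-`i` coordinates matter); at step
`t+1` the scanned variable emits 𝟙[w > 0] and only its active weight is updated. -/
structure HerdedGibbs (N : ℕ) (hN : 0 < N) (π : GState N → ℝ) where
  X : ℕ → GState N
  W : ℕ → Fin N → GState N → ℝ
  init_support : 0 < π (X 0)
  init_w : ∀ i x, condProb π i x true - 1 < W 0 i x ∧ W 0 i x ≤ condProb π i x true
  step_other : ∀ t j, j ≠ scanVar N hN (t + 1) → X (t + 1) j = X t j
  step_cur : ∀ t, X (t + 1) (scanVar N hN (t + 1))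
      = decide (0 < W t (scanVar N hN (t + 1)) (X t))
  w_active : ∀ t x, (∀ j, j ≠ scanVar N hN (t + 1) → x j = X t j) →
      W (t + 1) (scanVar N hN (t + 1)) x
        = W t (scanVar N hN (t + 1)) x + condProb π (scanVar N hN (t + 1)) x true
          - (if X (t + 1) (scanVar N hN (t + 1)) = true then 1 else 0)
  w_frozen : ∀ t i x, ¬(i = scanVar N hN (t + 1) ∧ ∀ j, j ≠ i → x j = X t j) →
      W (t + 1) i x = W t i x

/-- Transition matrix 𝒯ᵢ of regular Gibbs updating variable `i`. -/
noncomputable def stepKernel {N : ℕ} (π : GState N → ℝ) (i : Fin N) :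
    Matrix (GState N) (GState N) ℝ :=
  fun x y => if ∀ j, j ≠ i → x j = y j then condProb π i x (y i) else 0

/-- Full-sweep Gibbs transition kernel 𝒯 = 𝒯₁𝒯₂⋯𝒯_N. -/
noncomputable def sweepKernel {N : ℕ} (π : GState N → ℝ) :
    Matrix (GState N) (GState N) ℝ :=
  (List.ofFn fun i : Fin N => stepKernel π i).prod

/-- Total variation distance d_v(μ − ν) = ‖μ − ν‖₁ / 2 on a finite state space. -/
noncomputable def tvDist {α : Type*} [Fintype α] (μ ν : α → ℝ) : ℝ :=
  (∑ x, |μ x - ν x|) / 2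

/-- Dobrushin ergodic coefficient of a transition matrix. -/
noncomputable def dobrushin {α : Type*} [Fintype α] (K : Matrix α α ℝ) : ℝ :=
  ⨆ x, ⨆ x', tvDist (K x) (K x')

/-- Empirical distribution of `T` end-of-sweep samples starting at sweep `τ`. -/
noncomputable def empDist {N : ℕ} (X : ℕ → GState N) (τ T : ℕ) : GState N → ℝ :=
  fun x => (((Finset.Ico τ (τ + T)).filter fun k => X (k * N) = x).card : ℝ) / T

/-- N_num: number of occurrences of the joint state (x₋ᵢ, b) at substep `i` of sweeps
τ, …, τ+T−1. -/
def empNum {N : ℕ} (hN : 0 < N) (X : ℕ → GState N) (τ T i : ℕ) (x : GState N)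
    (b : Bool) : ℕ :=
  ((Finset.Ico τ (τ + T)).filter fun k =>
    (∀ j, j ≠ scanVar N hN i → X (k * N + i) j = x j)
      ∧ X (k * N + i) (scanVar N hN i) = b).card

/-- N_den: number of occurrences of the conditioning state x₋ᵢ at substep `i − 1`. -/
def empDen {N : ℕ} (hN : 0 < N) (X : ℕ → GState N) (τ T i : ℕ) (x : GState N) : ℕ :=
  ((Finset.Ico τ (τ + T)).filter fun k =>
    ∀ j, j ≠ scanVar N hN i → X (k * N + i - 1) j = x j).card

/-- Empirical herded Gibbs single-step transition kernel T̃⁽ᵗ⁾_{T,i}; entries with an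
unvisited conditioning state are set to the regular Gibbs kernel. -/
noncomputable def empStepKernel {N : ℕ} (hN : 0 < N) (π : GState N → ℝ)
    (X : ℕ → GState N) (τ T i : ℕ) : Matrix (GState N) (GState N) ℝ :=
  fun x y => if ∀ j, j ≠ scanVar N hN i → x j = y j then
      (if empDen hN X τ T i x = 0 then condProb π (scanVar N hN i) x (y (scanVar N hN i))
       else (empNum hN X τ T i x (y (scanVar N hN i)) : ℝ) / (empDen hN X τ T i x : ℝ))
    else 0

/-- Empirical full-sweep herded Gibbs kernel T̃⁽ᵗ⁾_T = T̃⁽ᵗ⁾_{T,1}⋯T̃⁽ᵗ⁾_{T,N}. -/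
noncomputable def empSweepKernel {N : ℕ} (hN : 0 < N) (π : GState N → ℝ)
    (X : ℕ → GState N) (τ T : ℕ) : Matrix (GState N) (GState N) ℝ :=
  (List.ofFn fun i : Fin N => empStepKernel hN π X τ T (i + 1)).prod

section Aux

variable {N : ℕ} {π : GState N → ℝ}

lemma condProb_update (j : Fin N) (x : GState N) (b b' : Bool) :
    condProb π j (Function.update x j b) b' = condProb π j x b' := by
  simp [condProb, Function.update_idem]

lemma condProb_nonneg (hπ0 : ∀ x, 0 ≤ π x) (j : Fin N) (x : GState N) (b : Bool) :
    0 ≤ condProb π j x b := by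
  rcases (add_nonneg (hπ0 (Function.update x j true)) (hπ0 (Function.update x j false))).lt_or_eq
    with h | h
  · exact div_nonneg (hπ0 _) h.le
  · rw [condProb, ← h, div_zero]

lemma condProb_le_one (hπ0 : ∀ x, 0 ≤ π x) (j : Fin N) (x : GState N) (b : Bool) :
    condProb π j x b ≤ 1 := by
  rcases (add_nonneg (hπ0 (Function.update x j true)) (hπ0 (Function.update x j false))).lt_or_eq
    with h | h
  · rw [condProb, div_le_one h]
    cases b
    · exact le_add_of_nonneg_left (hπ0 _)
    · exact le_add_of_nonneg_right (hπ0 _)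
  · rw [condProb, ← h, div_zero]; norm_num

lemma condProb_add_one
    (h : 0 < π (Function.update x j true) + π (Function.update x j false)) :
    condProb π j x true + condProb π j x false = 1 := by
  rw [condProb, condProb, ← add_div, div_self h.ne']

end Aux
section Aux2

variable {N : ℕ} {π : GState N → ℝ} {hN : 0 < N}

lemma scanVar_succ (t : ℕ) : scanVar N hN (t + 1) = ⟨t % N, Nat.mod_lt _ hN⟩ := rfl

lemma scanVar_val {i : ℕ} (hi1 : 1 ≤ i) (hi2 : i ≤ N) :
    (scanVar N hN i : ℕ) = i - 1 := by
  show (i - 1) % N = i - 1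
  exact Nat.mod_eq_of_lt (by omega)

lemma scanVar_sweep {i : ℕ} (hi1 : 1 ≤ i) (hi2 : i ≤ N) (k : ℕ) :
    scanVar N hN (k * N + i) = scanVar N hN i := by
  apply Fin.ext
  show (k * N + i - 1) % N = (i - 1) % N
  have h1 : k * N + i - 1 = (i - 1) + k * N := by
    generalize k * N = m; omega
  rw [h1, Nat.add_mul_mod_self_right]

lemma scanVar_succ_ne {i : ℕ} (hi1 : 1 ≤ i) (hi2 : i ≤ N) (t : ℕ)
    (h : t % N ≠ i - 1) : scanVar N hN (t + 1) ≠ scanVar N hN i := by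
  rw [scanVar_succ]
  intro hc
  apply h
  have := congrArg (Fin.val) hc
  simpa [scanVar_val hi1 hi2] using this

end Aux2
section Aux3

variable {N : ℕ} {π : GState N → ℝ} {hN : 0 < N} (hg : HerdedGibbs N hN π)
  {i : ℕ} (x : GState N)

/-- One step of the weight attached to variable `scanVar i` and class of `x`. -/
lemma W_step (b : Bool) (t : ℕ) :
    hg.W (t + 1) (scanVar N hN i) (Function.update x (scanVar N hN i) b)
      = if scanVar N hN (t + 1) = scanVar N hN i
            ∧ (∀ j, j ≠ scanVar N hN i → x j = hg.X t j) then
          hg.W t (scanVar N hN i) (Function.update x (scanVar N hN i) b)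
            + condProb π (scanVar N hN i) x true
            - (if hg.X (t + 1) (scanVar N hN i) = true then 1 else 0)
        else hg.W t (scanVar N hN i) (Function.update x (scanVar N hN i) b) := by
  set s := scanVar N hN i with hs
  by_cases h : scanVar N hN (t + 1) = s ∧ (∀ j, j ≠ s → x j = hg.X t j)
  · rw [if_pos h]
    obtain ⟨hsc, hm⟩ := h
    have hm' : ∀ j, j ≠ scanVar N hN (t + 1) → Function.update x s b j = hg.X t j := by
      intro j hj
      rw [hsc] at hj
      rw [Function.update_of_ne hj]
      exact hm j hj
    have hact := hg.w_active t (Function.update x s b) hm'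
    rw [hsc] at hact
    rw [hact, condProb_update]
  · rw [if_neg h]
    apply hg.w_frozen
    intro ⟨h1, h2⟩
    apply h
    refine ⟨h1.symm, fun j hj => ?_⟩
    have := h2 j hj
    rwa [Function.update_of_ne hj] at this

end Aux3
section Aux4

variable {N : ℕ} {π : GState N → ℝ} {hN : 0 < N} (hg : HerdedGibbs N hN π)
  {i : ℕ} (x : GState N)

lemma state_eq_update {t : ℕ} (hm : ∀ j, j ≠ scanVar N hN i → x j = hg.X t j) :
    hg.X t = Function.update x (scanVar N hN i) (hg.X t (scanVar N hN i)) := by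
  funext j
  by_cases hj : j = scanVar N hN i
  · subst hj; rw [Function.update_self]
  · rw [Function.update_of_ne hj, ← hm j hj]

lemma W_diff (t : ℕ) :
    hg.W t (scanVar N hN i) (Function.update x (scanVar N hN i) true)
      - hg.W t (scanVar N hN i) (Function.update x (scanVar N hN i) false)
    = hg.W 0 (scanVar N hN i) (Function.update x (scanVar N hN i) true)
      - hg.W 0 (scanVar N hN i) (Function.update x (scanVar N hN i) false) := by
  induction t with
  | zero => rfl
  | succ t ih =>
    rw [W_step hg x true t, W_step hg x false t]
    split_ifs with h h2 <;> linarith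

/-- The key invariant: the true-variant weight stays within a window of length
`1 + |c|` where `c` is the (constant) difference between the two variant weights. -/
lemma W_inv (hπ0 : ∀ y, 0 ≤ π y) (t : ℕ) :
    condProb π (scanVar N hN i) x true - 1
        + min (hg.W 0 (scanVar N hN i) (Function.update x (scanVar N hN i) true)
            - hg.W 0 (scanVar N hN i) (Function.update x (scanVar N hN i) false)) 0
      < hg.W t (scanVar N hN i) (Function.update x (scanVar N hN i) true)
    ∧ hg.W t (scanVar N hN i) (Function.update x (scanVar N hN i) true)
      ≤ condProb π (scanVar N hN i) x true
        + max (hg.W 0 (scanVar N hN i) (Function.update x (scanVar N hN i) true)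
            - hg.W 0 (scanVar N hN i) (Function.update x (scanVar N hN i) false)) 0 := by
  set s := scanVar N hN i with hs
  set p := condProb π s x true with hp
  set c := hg.W 0 s (Function.update x s true) - hg.W 0 s (Function.update x s false) with hc
  have hp0 : 0 ≤ p := condProb_nonneg hπ0 s x true
  have hp1 : p ≤ 1 := condProb_le_one hπ0 s x true
  have hmin : min c 0 ≤ 0 := min_le_right _ _
  have hminc : min c 0 ≤ c := min_le_left _ _
  have hmax : 0 ≤ max c 0 := le_max_right _ _
  have hmaxc : c ≤ max c 0 := le_max_left _ _
  induction t with
  | zero =>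
    have h0 := hg.init_w s (Function.update x s true)
    rw [condProb_update] at h0
    constructor <;> [linarith [h0.1]; linarith [h0.2]]
  | succ t ih =>
    rw [W_step hg x true t]
    by_cases h : scanVar N hN (t + 1) = s ∧ (∀ j, j ≠ s → x j = hg.X t j)
    · rw [if_pos h]
      obtain ⟨hsc, hm⟩ := h
      -- the driver weight is one of the two variant weights
      have hbit : hg.X (t + 1) s = decide (0 < hg.W t s (hg.X t)) := by
        have := hg.step_cur t
        rwa [hsc] at this
      have hXt : hg.X t = Function.update x s (hg.X t s) := state_eq_update hg x hm
      have hdiff : hg.W t s (Function.update x s true)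
          - hg.W t s (Function.update x s false) = c := W_diff hg x t
      have hdrv : hg.W t s (hg.X t) = hg.W t s (Function.update x s true)
          ∨ hg.W t s (hg.X t) = hg.W t s (Function.update x s true) - c := by
        cases hxt : hg.X t s with
        | true => left; rw [hXt, hxt]
        | false => right; rw [hXt, hxt]; linarith
      cases hb : hg.X (t + 1) s with
      | true =>
        rw [if_pos rfl]
        rw [hb] at hbit
        have hpos : 0 < hg.W t s (hg.X t) := by
          have := hbit.symm
          simpa using this
        have hlow : min c 0 < hg.W t s (Function.update x s true) := by
          rcases hdrv with h1 | h1 <;> rw [h1] at hpos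
          · exact lt_of_le_of_lt hmin hpos
          · exact lt_of_le_of_lt hminc (by linarith)
        constructor <;> linarith [ih.1, ih.2]
      | false =>
        rw [if_neg (by simp [hb])]
        rw [hb] at hbit
        have hnpos : hg.W t s (hg.X t) ≤ 0 := by
          by_contra hcon
          push_neg at hcon
          simp [hcon] at hbit
        have hupp : hg.W t s (Function.update x s true) ≤ max c 0 := by
          rcases hdrv with h1 | h1 <;> rw [h1] at hnpos
          · exact le_trans hnpos hmax
          · exact le_trans (by linarith) hmaxc
        constructor <;> linarith [ih.1, ih.2]
    · rw [if_neg h]; exact ih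

end Aux4
section Aux5

variable {N : ℕ} {π : GState N → ℝ} {hN : 0 < N} (hg : HerdedGibbs N hN π)

/-- Weights of "deterministic" classes (conditional 0 or 1) never change sign. -/
lemma W_ext (t : ℕ) : ∀ (j : Fin N) (y : GState N),
    (condProb π j y true = 1 → 0 < hg.W t j y)
      ∧ (condProb π j y true = 0 → hg.W t j y ≤ 0) := by
  induction t with
  | zero =>
    intro j y
    have h0 := hg.init_w j y
    constructor <;> intro h <;> rw [h] at h0
    · linarith [h0.1]
    · linarith [h0.2]
  | succ t ih =>
    intro j y
    by_cases h : j = scanVar N hN (t + 1) ∧ ∀ j', j' ≠ j → y j' = hg.X t j'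
    · obtain ⟨hj, hm⟩ := h
      subst hj
      set s := scanVar N hN (t + 1) with hs
      have hact := hg.w_active t y hm
      have hXt : hg.X t = Function.update y s (hg.X t s) := by
        funext j'
        by_cases hj' : j' = s
        · subst hj'; rw [Function.update_self]
        · rw [Function.update_of_ne hj', ← hm j' hj']
      have hcp : condProb π s (hg.X t) true = condProb π s y true := by
        rw [hXt, condProb_update]
      have hbit : hg.X (t + 1) s = decide (0 < hg.W t s (hg.X t)) := hg.step_cur t
      constructor <;> intro hcase
      · have hdrv : 0 < hg.W t s (hg.X t) := (ih s (hg.X t)).1 (by rw [hcp, hcase])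
        have hb : hg.X (t + 1) s = true := by rw [hbit]; simpa using hdrv
        rw [hact, hb, hcase, if_pos rfl]
        have := (ih s y).1 hcase
        linarith
      · have hdrv : hg.W t s (hg.X t) ≤ 0 := (ih s (hg.X t)).2 (by rw [hcp, hcase])
        have hb : hg.X (t + 1) s = false := by
          rw [hbit]
          simpa using not_lt.mpr hdrv
        rw [hact, hb, hcase]
        simp only [Bool.false_eq_true, if_false]
        have := (ih s y).2 hcase
        linarith
    · rw [hg.w_frozen t j y h]
      exact ih j y

/-- The herded trajectory stays in the support of π. -/
lemma X_pos (hπ0 : ∀ y, 0 ≤ π y) (t : ℕ) : 0 < π (hg.X t) := by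
  induction t with
  | zero => exact hg.init_support
  | succ t ih =>
    set s := scanVar N hN (t + 1) with hs
    have hX1 : hg.X (t + 1) = Function.update (hg.X t) s (hg.X (t + 1) s) := by
      funext j
      by_cases hj : j = s
      · subst hj; rw [Function.update_self]
      · rw [Function.update_of_ne hj, hg.step_other t j hj]
    have hself : Function.update (hg.X t) s (hg.X t s) = hg.X t := Function.update_eq_self _ _
    have hsum : 0 < π (Function.update (hg.X t) s true) + π (Function.update (hg.X t) s false) := by
      cases hxs : hg.X t s with
      | true =>
        have h1 : Function.update (hg.X t) s true = hg.X t := by rw [← hxs]; exact hself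
        have := hπ0 (Function.update (hg.X t) s false)
        rw [h1]
        linarith [ih, this]
      | false =>
        have h1 : Function.update (hg.X t) s false = hg.X t := by rw [← hxs]; exact hself
        have := hπ0 (Function.update (hg.X t) s true)
        rw [h1]
        linarith [ih, this]
    have hbit : hg.X (t + 1) s = decide (0 < hg.W t s (hg.X t)) := hg.step_cur t
    rcases (hπ0 (Function.update (hg.X t) s true)).lt_or_eq with hA | hA
    · rcases (hπ0 (Function.update (hg.X t) s false)).lt_or_eq with hB | hB
      · -- both variants in the support
        rw [hX1]
        cases hg.X (t + 1) s
        · exact hB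
        · exact hA
      · -- only the true variant
        have hp : condProb π s (hg.X t) true = 1 := by
          rw [condProb, ← hB, add_zero, div_self hA.ne']
        have hdrv := (W_ext hg t s (hg.X t)).1 hp
        have hb1 : hg.X (t + 1) s = true := by rw [hbit]; simpa using hdrv
        rw [hX1, hb1]
        exact hA
    · rcases (hπ0 (Function.update (hg.X t) s false)).lt_or_eq with hB | hB
      · have hp : condProb π s (hg.X t) true = 0 := by
          rw [condProb, ← hA, zero_div]
        have hdrv := (W_ext hg t s (hg.X t)).2 hp
        have hb1 : hg.X (t + 1) s = false := by
          rw [hbit]; simpa using not_lt.mpr hdrv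
        rw [hX1, hb1]
        exact hB
      · rw [← hA, ← hB] at hsum
        linarith
end Aux5
section Aux6

variable {N : ℕ} {π : GState N → ℝ} {hN : 0 < N} (hg : HerdedGibbs N hN π)
  {i : ℕ} (x : GState N)

lemma W_const (b : Bool) (a : ℕ) : ∀ m : ℕ,
    (∀ u, u < m → scanVar N hN (a + u + 1) ≠ scanVar N hN i) →
    hg.W (a + m) (scanVar N hN i) (Function.update x (scanVar N hN i) b)
      = hg.W a (scanVar N hN i) (Function.update x (scanVar N hN i) b) := by
  intro m
  induction m with
  | zero => intro _; rfl
  | succ m ih =>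
    intro h
    have : a + (m + 1) = (a + m) + 1 := by omega
    rw [this, W_step hg x b (a + m),
      if_neg (fun hc => h m (Nat.lt_succ_self m) hc.1)]
    exact ih fun u hu => h u (Nat.lt_succ_of_lt hu)

lemma sweep_step (hi1 : 1 ≤ i) (hi2 : i ≤ N) (b : Bool) (k : ℕ) :
    hg.W ((k + 1) * N) (scanVar N hN i) (Function.update x (scanVar N hN i) b)
      = hg.W (k * N) (scanVar N hN i) (Function.update x (scanVar N hN i) b)
        + (if ∀ j, j ≠ scanVar N hN i → hg.X (k * N + i - 1) j = x j then
            condProb π (scanVar N hN i) x true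
              - (if hg.X (k * N + i) (scanVar N hN i) = true then 1 else 0)
          else 0) := by
  have hmod : ∀ u, u < N → (k * N + u) % N = u := by
    intro u hu
    have h1 : k * N + u = u + k * N := by omega
    rw [h1, Nat.add_mul_mod_self_right, Nat.mod_eq_of_lt hu]
  -- step 1 : constant from k*N to k*N + (i-1)
  have h1 : hg.W (k * N + (i - 1)) (scanVar N hN i) (Function.update x (scanVar N hN i) b)
      = hg.W (k * N) (scanVar N hN i) (Function.update x (scanVar N hN i) b) := by
    apply W_const hg x b (k * N) (i - 1)
    intro u hu
    apply scanVar_succ_ne hi1 hi2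
    rw [hmod u (by omega)]
    omega
  -- step 2 : the active step
  have h2 : hg.W (k * N + i) (scanVar N hN i) (Function.update x (scanVar N hN i) b)
      = hg.W (k * N + (i - 1)) (scanVar N hN i) (Function.update x (scanVar N hN i) b)
        + (if ∀ j, j ≠ scanVar N hN i → hg.X (k * N + i - 1) j = x j then
            condProb π (scanVar N hN i) x true
              - (if hg.X (k * N + i) (scanVar N hN i) = true then 1 else 0)
          else 0) := by
    have he : k * N + (i - 1) + 1 = k * N + i := by omega
    have hsc : scanVar N hN (k * N + i) = scanVar N hN i := by
      exact scanVar_sweep hi1 hi2 k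
    have := W_step hg x b (k * N + (i - 1)) (i := i)
    rw [he] at this
    rw [this]
    have he2 : k * N + i - 1 = k * N + (i - 1) := by omega
    by_cases hm : ∀ j, j ≠ scanVar N hN i → hg.X (k * N + i - 1) j = x j
    · rw [if_pos ⟨hsc, fun j hj => ((he2 ▸ hm) j hj).symm⟩, if_pos hm]
      ring
    · rw [if_neg, if_neg hm]
      · ring
      · intro ⟨_, hc⟩
        exact hm fun j hj => (he2 ▸ (hc j hj)).symm
  -- step 3 : constant from k*N + i to (k+1)*N
  have h3 : hg.W (k * N + i + (N - i)) (scanVar N hN i) (Function.update x (scanVar N hN i) b)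
      = hg.W (k * N + i) (scanVar N hN i) (Function.update x (scanVar N hN i) b) := by
    apply W_const hg x b (k * N + i) (N - i)
    intro u hu
    apply scanVar_succ_ne hi1 hi2
    have : k * N + i + u = k * N + (i + u) := by omega
    rw [this, hmod (i + u) (by omega)]
    omega
  have he3 : k * N + i + (N - i) = (k + 1) * N := by
    have : (k + 1) * N = k * N + N := by ring
    omega
  rw [← he3, h3, h2, h1]

end Aux6
section Aux7

variable {N : ℕ} {π : GState N → ℝ} {hN : 0 < N} (hg : HerdedGibbs N hN π)
  {i : ℕ} (x : GState N)

lemma card_filter_succ (P : ℕ → Prop) [DecidablePred P] (τ T : ℕ) :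
    ((Finset.Ico τ (τ + T + 1)).filter P).card
      = ((Finset.Ico τ (τ + T)).filter P).card + if P (τ + T) then 1 else 0 := by
  rw [Nat.Ico_succ_right_eq_insert_Ico (Nat.le_add_right τ T), Finset.filter_insert]
  split_ifs with h
  · rw [Finset.card_insert_of_notMem (by simp)]
  · rw [add_zero]

lemma X_trans (hi1 : 1 ≤ i) (hi2 : i ≤ N) (k : ℕ) (j : Fin N)
    (hj : j ≠ scanVar N hN i) : hg.X (k * N + i) j = hg.X (k * N + i - 1) j := by
  have he : k * N + i - 1 + 1 = k * N + i := by
    generalize k * N = m; omega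
  have := hg.step_other (k * N + i - 1) j (by rw [he]; exact hj ∘ (scanVar_sweep hi1 hi2 k ▸ id))
  rwa [he] at this

lemma num_pred_iff (hi1 : 1 ≤ i) (hi2 : i ≤ N) (k : ℕ) (b : Bool) :
    ((∀ j, j ≠ scanVar N hN i → hg.X (k * N + i) j = x j)
        ∧ hg.X (k * N + i) (scanVar N hN i) = b)
      ↔ ((∀ j, j ≠ scanVar N hN i → hg.X (k * N + i - 1) j = x j)
        ∧ hg.X (k * N + i) (scanVar N hN i) = b) := by
  constructor <;> rintro ⟨h1, h2⟩ <;> refine ⟨fun j hj => ?_, h2⟩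
  · rw [← X_trans hg hi1 hi2 k j hj]; exact h1 j hj
  · rw [X_trans hg hi1 hi2 k j hj]; exact h1 j hj

lemma main_count (hi1 : 1 ≤ i) (hi2 : i ≤ N) (τ : ℕ) : ∀ T : ℕ,
    hg.W ((τ + T) * N) (scanVar N hN i) (Function.update x (scanVar N hN i) true)
      = hg.W (τ * N) (scanVar N hN i) (Function.update x (scanVar N hN i) true)
        + (empDen hN hg.X τ T i x : ℝ) * condProb π (scanVar N hN i) x true
        - (empNum hN hg.X τ T i x true : ℝ) := by
  intro T
  induction T with
  | zero => simp [empDen, empNum]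
  | succ T ih =>
    have he : τ + (T + 1) = (τ + T) + 1 := rfl
    rw [he, sweep_step hg x hi1 hi2 true (τ + T)]
    have hden : empDen hN hg.X τ (T + 1) i x = empDen hN hg.X τ T i x
        + if (∀ j, j ≠ scanVar N hN i → hg.X ((τ + T) * N + i - 1) j = x j) then 1 else 0 := by
      unfold empDen
      rw [show τ + (T + 1) = τ + T + 1 by omega]
      exact card_filter_succ _ τ T
    have hnum : empNum hN hg.X τ (T + 1) i x true = empNum hN hg.X τ T i x true
        + if ((∀ j, j ≠ scanVar N hN i → hg.X ((τ + T) * N + i - 1) j = x j)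
            ∧ hg.X ((τ + T) * N + i) (scanVar N hN i) = true) then 1 else 0 := by
      unfold empNum
      rw [show τ + (T + 1) = τ + T + 1 by omega]
      rw [card_filter_succ _ τ T]
      congr 1
      by_cases h : ((∀ j, j ≠ scanVar N hN i → hg.X ((τ + T) * N + i - 1) j = x j)
          ∧ hg.X ((τ + T) * N + i) (scanVar N hN i) = true)
      · rw [if_pos ((num_pred_iff hg x hi1 hi2 (τ + T) true).mpr h), if_pos h]
      · rw [if_neg (fun hc => h ((num_pred_iff hg x hi1 hi2 (τ + T) true).mp hc)), if_neg h]
    rw [hden, hnum, ih]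
    push_cast
    by_cases hM : (∀ j, j ≠ scanVar N hN i → hg.X ((τ + T) * N + i - 1) j = x j)
    · by_cases hb : hg.X ((τ + T) * N + i) (scanVar N hN i) = true
      · rw [if_pos hM, if_pos hM, if_pos hb, if_pos ⟨hM, hb⟩]
        push_cast
        ring
      · rw [if_pos hM, if_pos hM, if_neg hb, if_neg (fun hc => hb hc.2)]
        push_cast
        ring
    · rw [if_neg hM, if_neg hM, if_neg (fun hc => hM hc.1)]
      push_cast
      ring

end Aux7
section Aux8

variable {N : ℕ} {π : GState N → ℝ} {hN : 0 < N} (hg : HerdedGibbs N hN π)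
  {i : ℕ} (x : GState N)

lemma part_count (hi1 : 1 ≤ i) (hi2 : i ≤ N) (τ T : ℕ) :
    empNum hN hg.X τ T i x true + empNum hN hg.X τ T i x false
      = empDen hN hg.X τ T i x := by
  classical
  unfold empNum empDen
  have e : ∀ b : Bool, (Finset.Ico τ (τ + T)).filter (fun k =>
        (∀ j, j ≠ scanVar N hN i → hg.X (k * N + i) j = x j)
          ∧ hg.X (k * N + i) (scanVar N hN i) = b)
      = ((Finset.Ico τ (τ + T)).filter (fun k =>
          ∀ j, j ≠ scanVar N hN i → hg.X (k * N + i - 1) j = x j)).filter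
            (fun k => hg.X (k * N + i) (scanVar N hN i) = b) := by
    intro b
    rw [Finset.filter_filter]
    exact Finset.filter_congr fun k _ => (num_pred_iff hg x hi1 hi2 k b)
  rw [e true, e false]
  have e2 : ((Finset.Ico τ (τ + T)).filter (fun k =>
          ∀ j, j ≠ scanVar N hN i → hg.X (k * N + i - 1) j = x j)).filter
            (fun k => hg.X (k * N + i) (scanVar N hN i) = false)
      = ((Finset.Ico τ (τ + T)).filter (fun k =>
          ∀ j, j ≠ scanVar N hN i → hg.X (k * N + i - 1) j = x j)).filter
            (fun k => ¬ (hg.X (k * N + i) (scanVar N hN i) = true)) :=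
    Finset.filter_congr fun k _ => by simp
  rw [e2]
  exact Finset.card_filter_add_card_filter_not _

lemma bit_det (hi1 : 1 ≤ i) (hi2 : i ≤ N) (k : ℕ)
    (hm : ∀ j, j ≠ scanVar N hN i → hg.X (k * N + i - 1) j = x j) :
    (condProb π (scanVar N hN i) x true = 1
        → hg.X (k * N + i) (scanVar N hN i) = true)
      ∧ (condProb π (scanVar N hN i) x true = 0
        → hg.X (k * N + i) (scanVar N hN i) = false) := by
  set s := scanVar N hN i with hs
  have he : k * N + i - 1 + 1 = k * N + i := by generalize k * N = m; omega
  have hsc : scanVar N hN (k * N + i) = s := scanVar_sweep hi1 hi2 k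
  have hbit := hg.step_cur (k * N + i - 1)
  rw [he, hsc] at hbit
  have hm' : ∀ j, j ≠ s → x j = hg.X (k * N + i - 1) j := fun j hj => (hm j hj).symm
  have hXt : hg.X (k * N + i - 1)
      = Function.update x s (hg.X (k * N + i - 1) s) := state_eq_update hg x hm'
  have hcp : condProb π s (hg.X (k * N + i - 1)) true = condProb π s x true := by
    rw [hXt, condProb_update]
  constructor <;> intro hcase
  · have hdrv := (W_ext hg (k * N + i - 1) s (hg.X (k * N + i - 1))).1 (by rw [hcp, hcase])
    rw [hbit]; simpa using hdrv
  · have hdrv := (W_ext hg (k * N + i - 1) s (hg.X (k * N + i - 1))).2 (by rw [hcp, hcase])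
    rw [hbit]; simpa using not_lt.mpr hdrv

lemma den_subset (hi1 : 1 ≤ i) (hi2 : i ≤ N) (τ T : ℕ) (b : Bool) :
    (Finset.Ico τ (τ + T)).filter
        (fun k => hg.X (k * N + i) = Function.update x (scanVar N hN i) b)
      ⊆ (Finset.Ico τ (τ + T)).filter
        (fun k => ∀ j, j ≠ scanVar N hN i → hg.X (k * N + i - 1) j = x j) := by
  intro k hk
  rw [Finset.mem_filter] at hk ⊢
  refine ⟨hk.1, fun j hj => ?_⟩
  rw [← X_trans hg hi1 hi2 k j hj, hk.2, Function.update_of_ne hj]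

lemma den_disjoint (τ T : ℕ) :
    Disjoint ((Finset.Ico τ (τ + T)).filter
        (fun k => hg.X (k * N + i) = Function.update x (scanVar N hN i) true))
      ((Finset.Ico τ (τ + T)).filter
        (fun k => hg.X (k * N + i) = Function.update x (scanVar N hN i) false)) := by
  rw [Finset.disjoint_left]
  intro k hk1 hk2
  rw [Finset.mem_filter] at hk1 hk2
  have := congrFun (hk1.2.symm.trans hk2.2) (scanVar N hN i)
  simp [Function.update_self] at this

end Aux8
section Aux9

variable {N : ℕ} {π : GState N → ℝ} {hN : 0 < N} (hg : HerdedGibbs N hN π)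
  {i : ℕ} (x : GState N)

/-- The herding discrepancy bound: the number of emitted `true`s is within 2 of
`n·p` over any window of sweeps. -/
lemma key_bound (hπ0 : ∀ y, 0 ≤ π y) (hi1 : 1 ≤ i) (hi2 : i ≤ N) (τ T : ℕ) :
    |(empNum hN hg.X τ T i x true : ℝ)
        - (empDen hN hg.X τ T i x : ℝ) * condProb π (scanVar N hN i) x true| ≤ 2 := by
  set s := scanVar N hN i with hs
  set p := condProb π s x true with hp
  set c := hg.W 0 s (Function.update x s true) - hg.W 0 s (Function.update x s false) with hc
  have hmain := main_count hg x hi1 hi2 τ T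
  have h1 := W_inv hg x hπ0 (τ * N) (i := i)
  have h2 := W_inv hg x hπ0 ((τ + T) * N) (i := i)
  rw [← hs, ← hp, ← hc] at h1 h2
  have hiw1 := hg.init_w s (Function.update x s true)
  have hiw2 := hg.init_w s (Function.update x s false)
  rw [condProb_update] at hiw1 hiw2
  have hc1 : c < 1 := by rw [hc]; linarith [hiw1.2, hiw2.1]
  have hc2 : -1 < c := by rw [hc]; linarith [hiw1.1, hiw2.2]
  have hmm : max c 0 - min c 0 ≤ 1 := by
    rcases le_or_gt 0 c with h | h
    · rw [max_eq_left h, min_eq_right h]; linarith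
    · rw [max_eq_right h.le, min_eq_left h.le]; linarith
  rw [abs_le]
  constructor <;> linarith [h1.1, h1.2, h2.1, h2.2]

end Aux9
/-- Herded kernel approximates the Gibbs kernel: with the linear visiting
rate constants l, B and T ≥ T* := 2B/l, the empirical single-step conditional of herded
Gibbs matches the true conditional within 2/(lT) on the support, and the per-variable
kernel discrepancy has L1 induced norm (max row sum) at most 4/(lT). -/
theorem herded_gibbs_kernel_approximation {N : ℕ} (hN : 0 < N)
    (π : GState N → ℝ) (hπ0 : ∀ x, 0 ≤ π x) (hπ1 : ∑ x, π x = 1)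
    (hg : HerdedGibbs N hN π)
    (l B : ℝ) (hl : 0 < l) (hB : 0 < B)
    (hrate : ∀ i : ℕ, 1 ≤ i → i ≤ N → ∀ x : GState N, 0 < π x → ∀ T s : ℕ,
      l * (T : ℝ) - B
        ≤ (((Finset.Ico s (s + T)).filter fun k => hg.X (k * N + i) = x).card : ℝ))
    (i : ℕ) (hi1 : 1 ≤ i) (hi2 : i ≤ N)
    (τ T : ℕ) (hT : 2 * B / l ≤ (T : ℝ)) :
    (∀ x : GState N,
        0 < π (Function.update x (scanVar N hN i) true)
              + π (Function.update x (scanVar N hN i) false) →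
        ∀ b : Bool,
          |(empNum hN hg.X τ T i x b : ℝ) / (empDen hN hg.X τ T i x : ℝ)
              - condProb π (scanVar N hN i) x b| ≤ 2 / (l * T)) ∧
    (∀ x : GState N,
        ∑ y, |empStepKernel hN π hg.X τ T i x y - stepKernel π (scanVar N hN i) x y|
          ≤ 4 / (l * T)) := by
  have hTpos : 0 < (T : ℝ) := lt_of_lt_of_le (by positivity) hT
  have hlT : 2 * B ≤ l * T := by
    rw [div_le_iff₀ hl] at hT; linarith
  have hlT0 : 0 < l * T := by positivity
  have claim1 : ∀ x : GState N,
      0 < π (Function.update x (scanVar N hN i) true)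
            + π (Function.update x (scanVar N hN i) false) →
      ∀ b : Bool,
        |(empNum hN hg.X τ T i x b : ℝ) / (empDen hN hg.X τ T i x : ℝ)
            - condProb π (scanVar N hN i) x b| ≤ 2 / (l * T) := by
    intro x hx b
    have hkey := key_bound hg x hπ0 hi1 hi2 τ T
    have hpart := part_count hg x hi1 hi2 τ T
    rcases (hπ0 (Function.update x (scanVar N hN i) true)).lt_or_eq with hA | hA
    · rcases (hπ0 (Function.update x (scanVar N hN i) false)).lt_or_eq with hB' | hB'
      · -- both variants in the support
        have h1 := hrate i hi1 hi2 _ hA T τ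
        have h2 := hrate i hi1 hi2 _ hB' T τ
        have hcard : ((Finset.Ico τ (τ + T)).filter
              (fun k => hg.X (k * N + i) = Function.update x (scanVar N hN i) true)).card
            + ((Finset.Ico τ (τ + T)).filter
              (fun k => hg.X (k * N + i) = Function.update x (scanVar N hN i) false)).card
            ≤ empDen hN hg.X τ T i x := by
          rw [← Finset.card_union_of_disjoint (den_disjoint hg x τ T)]
          exact Finset.card_le_card (Finset.union_subset_iff.mpr
            ⟨den_subset hg x hi1 hi2 τ T true, den_subset hg x hi1 hi2 τ T false⟩)
        have hcard' : ((((Finset.Ico τ (τ + T)).filter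
              (fun k => hg.X (k * N + i) = Function.update x (scanVar N hN i) true)).card : ℝ)
            + (((Finset.Ico τ (τ + T)).filter
              (fun k => hg.X (k * N + i) = Function.update x (scanVar N hN i) false)).card : ℝ))
            ≤ (empDen hN hg.X τ T i x : ℝ) := by exact_mod_cast hcard
        have hn : l * T ≤ (empDen hN hg.X τ T i x : ℝ) := by linarith
        have hn0 : (0 : ℝ) < (empDen hN hg.X τ T i x : ℝ) := lt_of_lt_of_le hlT0 hn
        have hpadd := condProb_add_one hx
        have htrue : |(empNum hN hg.X τ T i x true : ℝ) / (empDen hN hg.X τ T i x : ℝ)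
            - condProb π (scanVar N hN i) x true| ≤ 2 / (empDen hN hg.X τ T i x : ℝ) := by
          have he : (empNum hN hg.X τ T i x true : ℝ) / (empDen hN hg.X τ T i x : ℝ)
              - condProb π (scanVar N hN i) x true
              = ((empNum hN hg.X τ T i x true : ℝ)
                - (empDen hN hg.X τ T i x : ℝ) * condProb π (scanVar N hN i) x true)
                  / (empDen hN hg.X τ T i x : ℝ) := by
            field_simp
          rw [he, abs_div, abs_of_pos hn0]
          exact (div_le_div_iff_of_pos_right hn0).mpr hkey
        have hfin : ∀ b : Bool, |(empNum hN hg.X τ T i x b : ℝ) / (empDen hN hg.X τ T i x : ℝ)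
            - condProb π (scanVar N hN i) x b| ≤ 2 / (empDen hN hg.X τ T i x : ℝ) := by
          intro b
          cases b
          · have hSf : (empNum hN hg.X τ T i x false : ℝ)
                = (empDen hN hg.X τ T i x : ℝ) - (empNum hN hg.X τ T i x true : ℝ) := by
              have := hpart
              push_cast [← this]
              ring
            have he : (empNum hN hg.X τ T i x false : ℝ) / (empDen hN hg.X τ T i x : ℝ)
                - condProb π (scanVar N hN i) x false
                = -((empNum hN hg.X τ T i x true : ℝ) / (empDen hN hg.X τ T i x : ℝ)
                  - condProb π (scanVar N hN i) x true) := by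
              have hpf : condProb π (scanVar N hN i) x false
                  = 1 - condProb π (scanVar N hN i) x true := by linarith
              rw [hSf, hpf]
              field_simp
              ring
            rw [he, abs_neg]
            exact htrue
          · exact htrue
        refine le_trans (hfin b) ?_
        gcongr
      · -- only the true variant is in the support : p = 1
        have hp1 : condProb π (scanVar N hN i) x true = 1 := by
          rw [condProb, ← hB', add_zero, div_self hA.ne']
        have hp0 : condProb π (scanVar N hN i) x false = 0 := by
          rw [condProb, ← hB', zero_div]
        have hfull : empNum hN hg.X τ T i x true = empDen hN hg.X τ T i x := by
          unfold empNum empDen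
          apply congrArg
          apply Finset.filter_congr
          intro k _
          constructor
          · rintro ⟨h1, _⟩ j hj
            rw [← X_trans hg hi1 hi2 k j hj]
            exact h1 j hj
          · intro hm
            exact ⟨fun j hj => by rw [X_trans hg hi1 hi2 k j hj]; exact hm j hj,
              (bit_det hg x hi1 hi2 k hm).1 hp1⟩
        have h1 := hrate i hi1 hi2 _ hA T τ
        have hsub : ((Finset.Ico τ (τ + T)).filter
              (fun k => hg.X (k * N + i) = Function.update x (scanVar N hN i) true)).card
            ≤ empDen hN hg.X τ T i x :=
          Finset.card_le_card (den_subset hg x hi1 hi2 τ T true)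
        have hn : l * T - B ≤ (empDen hN hg.X τ T i x : ℝ) :=
          le_trans h1 (by exact_mod_cast hsub)
        have hn0 : (0 : ℝ) < (empDen hN hg.X τ T i x : ℝ) := by linarith
        cases b
        · have hSf : empNum hN hg.X τ T i x false = 0 := by omega
          rw [hSf, hp0]
          simp only [Nat.cast_zero, zero_div, sub_zero, abs_zero]
          positivity
        · rw [hfull, hp1, div_self hn0.ne']
          simp only [sub_self, abs_zero]
          positivity
    · rcases (hπ0 (Function.update x (scanVar N hN i) false)).lt_or_eq with hB' | hB'
      · -- only the false variant is in the support : p = 0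
        have hp1 : condProb π (scanVar N hN i) x true = 0 := by
          rw [condProb, ← hA, zero_div]
        have hp0 : condProb π (scanVar N hN i) x false = 1 := by
          rw [condProb, ← hA, zero_add, div_self hB'.ne']
        have hempty : empNum hN hg.X τ T i x true = 0 := by
          unfold empNum
          rw [Finset.card_eq_zero, Finset.filter_eq_empty_iff]
          rintro k _ ⟨h1, h2⟩
          have hm : ∀ j, j ≠ scanVar N hN i → hg.X (k * N + i - 1) j = x j := by
            intro j hj
            rw [← X_trans hg hi1 hi2 k j hj]
            exact h1 j hj
          have := (bit_det hg x hi1 hi2 k hm).2 hp1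
          rw [h2] at this
          exact Bool.noConfusion this
        have hfullf : empNum hN hg.X τ T i x false = empDen hN hg.X τ T i x := by omega
        have h1 := hrate i hi1 hi2 _ hB' T τ
        have hsub : ((Finset.Ico τ (τ + T)).filter
              (fun k => hg.X (k * N + i) = Function.update x (scanVar N hN i) false)).card
            ≤ empDen hN hg.X τ T i x :=
          Finset.card_le_card (den_subset hg x hi1 hi2 τ T false)
        have hn : l * T - B ≤ (empDen hN hg.X τ T i x : ℝ) :=
          le_trans h1 (by exact_mod_cast hsub)
        have hn0 : (0 : ℝ) < (empDen hN hg.X τ T i x : ℝ) := by linarith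
        cases b
        · rw [hfullf, hp0, div_self hn0.ne']
          simp only [sub_self, abs_zero]
          positivity
        · rw [hempty, hp1]
          simp only [Nat.cast_zero, zero_div, sub_zero, abs_zero]
          positivity
      · exfalso
        rw [← hA, ← hB'] at hx
        simp at hx
  refine ⟨claim1, ?_⟩
  intro x
  by_cases hden : empDen hN hg.X τ T i x = 0
  · have hz : ∀ y, empStepKernel hN π hg.X τ T i x y - stepKernel π (scanVar N hN i) x y = 0 := by
      intro y
      unfold empStepKernel stepKernel
      by_cases hm : ∀ j, j ≠ scanVar N hN i → x j = y j
      · rw [if_pos hm, if_pos hm, if_pos hden, sub_self]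
      · rw [if_neg hm, if_neg hm, sub_self]
    calc ∑ y, |empStepKernel hN π hg.X τ T i x y - stepKernel π (scanVar N hN i) x y|
        = 0 := by simp [hz]
      _ ≤ 4 / (l * T) := by positivity
  · have hx : 0 < π (Function.update x (scanVar N hN i) true)
        + π (Function.update x (scanVar N hN i) false) := by
      have hne : ((Finset.Ico τ (τ + T)).filter
          (fun k => ∀ j, j ≠ scanVar N hN i → hg.X (k * N + i - 1) j = x j)).Nonempty := by
        rw [← Finset.card_pos]
        exact Nat.pos_of_ne_zero hden
      obtain ⟨k, hk⟩ := hne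
      have hm := (Finset.mem_filter.mp hk).2
      have hXk := X_pos hg hπ0 (k * N + i - 1)
      have hXe : hg.X (k * N + i - 1)
          = Function.update x (scanVar N hN i) (hg.X (k * N + i - 1) (scanVar N hN i)) :=
        state_eq_update hg x (fun j hj => (hm j hj).symm)
      rw [hXe] at hXk
      cases hv : hg.X (k * N + i - 1) (scanVar N hN i)
      · rw [hv] at hXk
        have := hπ0 (Function.update x (scanVar N hN i) true)
        linarith
      · rw [hv] at hXk
        have := hπ0 (Function.update x (scanVar N hN i) false)
        linarith
    have hc1t := claim1 x hx true
    have hc1f := claim1 x hx false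
    set y1 := Function.update x (scanVar N hN i) true with hy1
    set y2 := Function.update x (scanVar N hN i) false with hy2
    have hy12 : y1 ≠ y2 := by
      intro h
      have := congrFun h (scanVar N hN i)
      simp [hy1, hy2, Function.update_self] at this
    have hzero : ∀ y ∈ (Finset.univ : Finset (GState N)), y ∉ ({y1, y2} : Finset (GState N)) →
        |empStepKernel hN π hg.X τ T i x y - stepKernel π (scanVar N hN i) x y| = 0 := by
      intro y _ hy
      have hm : ¬ ∀ j, j ≠ scanVar N hN i → x j = y j := by
        intro hm
        apply hy
        have hye : y = Function.update x (scanVar N hN i) (y (scanVar N hN i)) := by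
          funext j
          by_cases hj : j = scanVar N hN i
          · subst hj; rw [Function.update_self]
          · rw [Function.update_of_ne hj, ← hm j hj]
        rw [Finset.mem_insert, Finset.mem_singleton]
        cases hys : y (scanVar N hN i)
        · right; rw [hy2, hye, hys]
        · left; rw [hy1, hye, hys]
      unfold empStepKernel stepKernel
      rw [if_neg hm, if_neg hm, sub_self, abs_zero]
    rw [← Finset.sum_subset (Finset.subset_univ ({y1, y2} : Finset (GState N))) hzero]
    rw [Finset.sum_pair hy12]
    have hterm : ∀ b : Bool, |empStepKernel hN π hg.X τ T i x (Function.update x (scanVar N hN i) b)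
        - stepKernel π (scanVar N hN i) x (Function.update x (scanVar N hN i) b)| ≤ 2 / (l * T) := by
      intro b
      have hm : ∀ j, j ≠ scanVar N hN i → x j = Function.update x (scanVar N hN i) b j :=
        fun j hj => (Function.update_of_ne hj _ _).symm
      unfold empStepKernel stepKernel
      rw [if_pos hm, if_pos hm, if_neg hden, Function.update_self]
      exact claim1 x hx b
    have h1 := hterm true
    have h2 := hterm false
    rw [← hy1] at h1
    rw [← hy2] at h2
    have h4 : 4 / (l * (T : ℝ)) = 2 / (l * T) + 2 / (l * T) := by ring
    linarith
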